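/- Let n be odd with n ≥ 5, let H be any simple graph on (n+1)/2 vertices, and let G = (H ∨ K̄_{(n−1)/2}) − (v₁, u₁) be the join with one cross edge deleted, where v₁ is on the H-side and u₁ is on the K̄-side. Then G is not 2-vertex-fault hamiltonian: deleting two vertices of the H-side from G leaves a non-hamiltonian graph. -/

import Mathlib

open SimpleGraph

set_option linter.unusedVariables false
set_option maxHeartbeats 1000000

lemma two_mul_indep_le {W : Type*} [Fintype W] [DecidableEq W] (G : SimpleGraph W)
    {a : W} {p : G.Walk a a} (hp : p.IsHamiltonianCycle)
    (I : Finset W) (hI : ∀ x ∈ I, ∀ y ∈ I, ¬ G.Adj x y) :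
    2 * I.card ≤ Fintype.card W := by
  classical
  set l : List W := p.support.tail with hl
  have hNnil : ¬ p.Nil := hp.1.not_nil
  have hNod : l.Nodup := by
    have := hp.isHamiltonian_tail.isPath.support_nodup
    rwa [SimpleGraph.Walk.support_tail_of_not_nil _ hNnil] at this
  have hmem : ∀ w : W, w ∈ l := by
    intro w
    have := hp.isHamiltonian_tail.mem_support w
    rwa [SimpleGraph.Walk.support_tail_of_not_nil _ hNnil] at this
  have hslen : p.support.length = p.length + 1 := SimpleGraph.Walk.length_support p
  have hlen' : l.length = p.support.length - 1 := by simp [hl]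
  have hlen : l.length = Fintype.card W := by
    have h2 := hp.length_eq
    omega
  have h3 : 3 ≤ l.length := by
    have := hp.1.three_le_length
    omega
  have hlnil : l ≠ [] := by
    intro h
    rw [h] at h3
    simp at h3
  set N := l.length with hN
  have hsupp : p.support = a :: l := by
    rw [hl]
    exact SimpleGraph.Walk.support_eq_cons p
  have hchain : List.IsChain G.Adj (a :: l) := by
    have := SimpleGraph.Walk.isChain_adj_support p
    rwa [SimpleGraph.Walk.support_eq_cons p] at this
  rw [List.isChain_iff_getElem] at hchain
  have hlast : l.getLast hlnil = a := by
    have h1 := SimpleGraph.Walk.getLast_support p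
    simp only [hsupp] at h1
    rw [List.getLast_cons hlnil] at h1
    exact h1
  -- cyclic adjacency
  have hadj : ∀ i (hi : i < N),
      G.Adj (l.get ⟨i, hi⟩) (l.get ⟨(i+1) % N, Nat.mod_lt _ (by omega)⟩) := by
    intro i hi
    by_cases hiN : i + 1 < N
    · have h := hchain (i+1) (by simp only [List.length_cons]; omega)
      simp only [List.getElem_cons_succ] at h
      have hmod : (i+1) % N = i + 1 := Nat.mod_eq_of_lt hiN
      convert h using 2
      · rfl
      · exact congrArg l.get (Fin.ext hmod : (⟨(i+1) % N, Nat.mod_lt _ (by omega)⟩ : Fin l.length) = ⟨i + 1, by omega⟩)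
    · have hieq : i = N - 1 := by omega
      have hmod : (i+1) % N = 0 := by
        have : i + 1 = N := by omega
        simp [this]
      have h0 := hchain 0 (by simp only [List.length_cons]; omega)
      simp only [List.getElem_cons_succ] at h0
      have hlg : l.get ⟨i, hi⟩ = a := by
        have hieq' : i = l.length - 1 := by omega
        subst hieq'
        exact (List.getLast_eq_getElem hlnil).symm.trans hlast
      rw [hlg]
      convert h0 using 2
      · rfl
      · exact congrArg l.get (Fin.ext hmod : (⟨(i+1) % N, Nat.mod_lt _ (by omega)⟩ : Fin l.length) = ⟨0, by omega⟩)
  have hgetinj : Function.Injective l.get := List.nodup_iff_injective_get.mp hNod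
  set g : W → W := fun w =>
    l.get ⟨(l.idxOf w + 1) % N, Nat.mod_lt _ (by omega)⟩ with hg
  have hadjg : ∀ w, G.Adj w (g w) := by
    intro w
    have hw : l.idxOf w < N := List.idxOf_lt_length_iff.mpr (hmem w)
    have := hadj (l.idxOf w) hw
    rwa [List.idxOf_get] at this
  have modkey : ∀ i, i < N → (i+1) % N = if i + 1 = N then 0 else i + 1 := by
    intro i hi
    split
    · next h => simp [h]
    · next h => exact Nat.mod_eq_of_lt (by omega)
  have hginj : Function.Injective g := by
    intro x y hxy
    have hx : l.idxOf x < N := List.idxOf_lt_length_iff.mpr (hmem x)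
    have hy : l.idxOf y < N := List.idxOf_lt_length_iff.mpr (hmem y)
    have h1 : (l.idxOf x + 1) % N = (l.idxOf y + 1) % N :=
      congrArg Fin.val (by exact_mod_cast hgetinj hxy)
    rw [modkey _ hx, modkey _ hy] at h1
    have h2 : l.idxOf x = l.idxOf y := by
      split at h1 <;> split at h1 <;> omega
    calc x = l.get ⟨l.idxOf x, hx⟩ := (List.idxOf_get hx).symm
      _ = l.get ⟨l.idxOf y, hy⟩ := by congr 1; exact Fin.ext h2
      _ = y := List.idxOf_get hy
  have hsub : I.image g ⊆ Iᶜ := by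
    intro w hw
    simp only [Finset.mem_image] at hw
    obtain ⟨x, hx, rfl⟩ := hw
    simp only [Finset.mem_compl]
    intro hgx
    exact hI x hx (g x) hgx (hadjg x)
  have h1 : I.card = (I.image g).card := (Finset.card_image_of_injective I hginj).symm
  have h2 : (I.image g).card ≤ Iᶜ.card := Finset.card_le_card hsub
  have h4 : I.card + Iᶜ.card = Fintype.card W := Finset.card_add_card_compl I
  omega


/-- The degree of a vertex: the number of its neighbors. -/
noncomputable def deg {α : Type*} (G : SimpleGraph α) (v : α) : ℕ :=
  (G.neighborSet v).ncard

/-- The join of two (disjoint) graphs: both graphs together with all cross edges. -/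
def gJoin {α β : Type*} (G : SimpleGraph α) (H : SimpleGraph β) : SimpleGraph (α ⊕ β) where
  Adj u v := match u, v with
    | Sum.inl a, Sum.inl b => G.Adj a b
    | Sum.inr a, Sum.inr b => H.Adj a b
    | _, _ => True
  symm := ⟨by
    rintro (a | a) (b | b) h
    · exact G.adj_symm h
    · trivial
    · trivial
    · exact H.adj_symm h⟩
  loopless := ⟨by
    rintro (a | a) h
    · exact G.loopless.irrefl a h
    · exact H.loopless.irrefl a h⟩

/-- `kK2 k` : the disjoint union of `k` copies of `K₂`. -/
def kK2 (k : ℕ) : SimpleGraph (Fin k × Fin 2) where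
  Adj p q := p.1 = q.1 ∧ p.2 ≠ q.2
  symm := ⟨fun p q h => ⟨h.1.symm, h.2.symm⟩⟩
  loopless := ⟨fun p h => h.2 rfl⟩

/-- `G − F`: the subgraph of `G` induced on the complement of the vertex set `F`. -/
def delVerts {W : Type*} [Fintype W] [DecidableEq W] (G : SimpleGraph W) (F : Finset W) :
    SimpleGraph ((Fᶜ : Finset W) : Set W) :=
  G.induce ((Fᶜ : Finset W) : Set W)

/-- For odd `n ≥ 5`, any `H` on `(n+1)/2` vertices and the graph
`G = (H ∨ K̄_{(n−1)/2}) − (v₁, u₁)`, `G` is not 2-vertex-fault hamiltonian: deleting two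
`H`-side vertices leaves a non-hamiltonian graph. -/
theorem statement_13 (n : ℕ) (hodd : Odd n) (hn5 : 5 ≤ n)
    (H : SimpleGraph (Fin ((n + 1) / 2)))
    (v₁ : Fin ((n + 1) / 2)) (u₁ : Fin ((n - 1) / 2))
    (G : SimpleGraph (Fin ((n + 1) / 2) ⊕ Fin ((n - 1) / 2)))
    (hG : G = (gJoin H (⊥ : SimpleGraph (Fin ((n - 1) / 2)))).deleteEdges
      {s(Sum.inl v₁, Sum.inr u₁)}) :
    ¬(∀ F : Finset (Fin ((n + 1) / 2) ⊕ Fin ((n - 1) / 2)), F.card ≤ 2 →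
        (delVerts G F).IsHamiltonian) ∧
    (∀ a b : Fin ((n + 1) / 2), a ≠ b →
      ¬(delVerts G {Sum.inl a, Sum.inl b}).IsHamiltonian) := by
  classical
  obtain ⟨m, hm⟩ := hodd
  have hm2 : 2 ≤ m := by omega
  have key : ∀ a b : Fin ((n + 1) / 2), a ≠ b →
      ¬(delVerts G {Sum.inl a, Sum.inl b}).IsHamiltonian := by
    intro a b hab hham
    set F : Finset (Fin ((n + 1) / 2) ⊕ Fin ((n - 1) / 2)) := {Sum.inl a, Sum.inl b} with hF
    have hFcard : F.card = 2 := by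
      rw [hF, Finset.card_insert_of_notMem (by simp [hab]), Finset.card_singleton]
    have hcardW : Fintype.card ((Fᶜ : Finset (Fin ((n + 1) / 2) ⊕ Fin ((n - 1) / 2))) : Set (Fin ((n + 1) / 2) ⊕ Fin ((n - 1) / 2))) = 2 * m - 1 := by
      have h1 : Fintype.card ((Fᶜ : Finset (Fin ((n + 1) / 2) ⊕ Fin ((n - 1) / 2))) : Set (Fin ((n + 1) / 2) ⊕ Fin ((n - 1) / 2))) = Fᶜ.card := by
        rw [← Fintype.card_coe]
        exact Fintype.card_congr (Equiv.subtypeEquivRight (by simp))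
      rw [h1, Finset.card_compl, hFcard]
      simp only [Fintype.card_sum, Fintype.card_fin]
      omega
    obtain ⟨v0, p, hp⟩ := hham (by omega)
    set I : Finset ((Fᶜ : Finset (Fin ((n + 1) / 2) ⊕ Fin ((n - 1) / 2))) : Set (Fin ((n + 1) / 2) ⊕ Fin ((n - 1) / 2))) :=
      Finset.univ.filter (fun x => x.1.isRight) with hI
    have hIindep : ∀ x ∈ I, ∀ y ∈ I, ¬ (delVerts G F).Adj x y := by
      intro x hx y hy hadj
      rw [hI, Finset.mem_filter] at hx hy
      obtain ⟨u, hu⟩ : ∃ u, x.1 = Sum.inr u := Sum.isRight_iff.mp hx.2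
      obtain ⟨u', hu'⟩ : ∃ u', y.1 = Sum.inr u' := Sum.isRight_iff.mp hy.2
      have : G.Adj x.1 y.1 := hadj
      rw [hu, hu', hG] at this
      exact ((gJoin H (⊥ : SimpleGraph (Fin ((n - 1) / 2)))).deleteEdges_le _ this)
    have hIcard : m ≤ I.card := by
      have hinj : ∀ u : Fin ((n - 1) / 2), (Sum.inr u : Fin ((n + 1) / 2) ⊕ Fin ((n - 1) / 2))
          ∈ ((Fᶜ : Finset (Fin ((n + 1) / 2) ⊕ Fin ((n - 1) / 2))) : Set (Fin ((n + 1) / 2) ⊕ Fin ((n - 1) / 2))) := by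
        intro u
        simp [hF]
      have := Finset.card_le_card_of_injOn
        (f := fun u : Fin ((n - 1) / 2) => (⟨Sum.inr u, hinj u⟩ : ((Fᶜ : Finset (Fin ((n + 1) / 2) ⊕ Fin ((n - 1) / 2))) : Set (Fin ((n + 1) / 2) ⊕ Fin ((n - 1) / 2)))))
        (s := Finset.univ) (t := I)
        (by intro u _; rw [hI]; simp)
        (by intro u _ u' _ h; simpa using congrArg Subtype.val h)
      simp only [Finset.card_univ, Fintype.card_fin] at this
      omega
    have hmain := two_mul_indep_le (delVerts G F) hp I hIindep
    omega
  refine ⟨fun hall => ?_, key⟩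
  have h2lt : 2 ≤ (n + 1) / 2 := by omega
  have hne : (⟨0, by omega⟩ : Fin ((n + 1) / 2)) ≠ ⟨1, by omega⟩ := by
    intro h
    simpa using congrArg Fin.val h
  exact key _ _ hne (hall _ (le_trans (Finset.card_insert_le _ _) (by simp)))
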